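/- Let a goods instance with n agents be given, and let x be a weighted proportional fractional allocation such that every fractional item is shared by exactly two agents (x_i(e) > 0 for exactly two agents i), distinct fractional items are shared by distinct pairs of agents, and the item-sharing graph — the simple graph on the agent set N with one edge {i, j} for each fractional item, joining its two holders i and j — is a tree on all n agents (hence there are exactly n − 1 fractional items). Then there exists an integral allocation X that allocates each non-fractional item to its sole holder and each fractional item to one of its two holders, such that ∑_{i∈N} max(w_i·v_i(M) − v_i(X_i), 0) ≤ n/3. -/

import Mathlib

set_option maxHeartbeats 1000000


private lemma sixteenth (u t : ℝ) (hu0 : 0 ≤ u) (hu1 : u ≤ 1) (ht0 : 0 ≤ t) (ht1 : t ≤ 1)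
    (hA : 1/3 < u * t) (hB : 1/3 < (1 - u) * (1 - t)) : False := by
  have hprod := mul_lt_mul'' hA hB (by norm_num) (by norm_num)
  have hb1 : (2*t - 1)^2 ≤ 1 := by nlinarith
  have key : (2*u - 1)^2 * (2*t - 1)^2 ≤ (2*u - 1)^2 :=
    mul_le_of_le_one_right (sq_nonneg _) hb1
  nlinarith [sq_nonneg (2*u - 1), sq_nonneg (2*t - 1), key, hprod]

private lemma cherry (x1 x2 q1 q2 r1 r2 : ℝ)
    (hx10 : 0 ≤ x1) (hx11 : x1 ≤ 1) (hx20 : 0 ≤ x2) (hx21 : x2 ≤ 1)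
    (hq10 : 0 ≤ q1) (hq11 : q1 ≤ 1) (hq20 : 0 ≤ q2) (hq21 : q2 ≤ 1)
    (hr10 : 0 ≤ r1) (hr11 : r1 ≤ 1) (hr20 : 0 ≤ r2) (hr21 : r2 ≤ 1) :
    ∃ s1 s2 : Bool,
      max (((1 - x1) - (if s1 then 0 else 1)) * r1) 0
      + max (((1 - x2) - (if s2 then 0 else 1)) * r2) 0
      + max ((x1 - (if s1 then 1 else 0)) * q1 + (x2 - (if s2 then 1 else 0)) * q2) 0
      ≤ 2/3 := by
  have pr1 : (1-x1)*r1 ≤ 1-x1 := mul_le_of_le_one_right (by linarith) hr11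
  have pr2 : (1-x2)*r2 ≤ 1-x2 := mul_le_of_le_one_right (by linarith) hr21
  have pr1' : 0 ≤ (1-x1)*r1 := mul_nonneg (by linarith) hr10
  have pr2' : 0 ≤ (1-x2)*r2 := mul_nonneg (by linarith) hr20
  have pq1 : x1*q1 ≤ x1 := mul_le_of_le_one_right hx10 hq11
  have pq2 : x2*q2 ≤ x2 := mul_le_of_le_one_right hx20 hq21
  have pq1' : 0 ≤ x1*q1 := mul_nonneg hx10 hq10
  have pq2' : 0 ≤ x2*q2 := mul_nonneg hx20 hq20
  have pg1 : 0 ≤ (1-x1)*q1 := mul_nonneg (by linarith) hq10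
  have pg2 : 0 ≤ (1-x2)*q2 := mul_nonneg (by linarith) hq20
  have pg1' : (1-x1)*q1 ≤ 1-x1 := mul_le_of_le_one_right (by linarith) hq11
  have pg2' : (1-x2)*q2 ≤ 1-x2 := mul_le_of_le_one_right (by linarith) hq21
  by_cases h2 : x1*q1 + x2*q2 ≤ 2/3
  · refine ⟨false, false, ?_⟩
    simp only [if_false, Bool.false_eq_true]
    have e1 : max (((1 - x1) - 1) * r1) 0 = 0 := max_eq_right (by nlinarith)
    have e2 : max (((1 - x2) - 1) * r2) 0 = 0 := max_eq_right (by nlinarith)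
    have e3 : max ((x1 - 0) * q1 + (x2 - 0) * q2) 0 ≤ 2/3 := by
      apply max_le (by nlinarith) (by norm_num)
    rw [e1, e2]; linarith
  by_cases h1 : (1-x1)*r1 + (1-x2)*r2 ≤ 2/3
  · refine ⟨true, true, ?_⟩
    simp only [if_true]
    have e3 : max ((x1 - 1) * q1 + (x2 - 1) * q2) 0 = 0 := max_eq_right (by nlinarith)
    have e1 : ((1 : ℝ) - x1) - 0 = 1 - x1 := by ring
    have e2 : ((1 : ℝ) - x2) - 0 = 1 - x2 := by ring
    rw [e1, e2, e3, max_eq_left pr1', max_eq_left pr2']; linarith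
  by_cases h3 : (1-x1)*r1 + max (x2*q2 - (1-x1)*q1) 0 ≤ 2/3
  · refine ⟨true, false, ?_⟩
    simp only [if_true, if_false, Bool.false_eq_true]
    have e1 : ((1 : ℝ) - x1) - 0 = 1 - x1 := by ring
    have e2 : max (((1 - x2) - 1) * r2) 0 = 0 := max_eq_right (by nlinarith)
    have e3 : (x1 - 1) * q1 + (x2 - 0) * q2 = x2*q2 - (1-x1)*q1 := by ring
    rw [e1, e2, e3, max_eq_left pr1']; linarith
  by_cases h4 : (1-x2)*r2 + max (x1*q1 - (1-x2)*q2) 0 ≤ 2/3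
  · refine ⟨false, true, ?_⟩
    simp only [if_true, if_false, Bool.false_eq_true]
    have e2 : ((1 : ℝ) - x2) - 0 = 1 - x2 := by ring
    have e1 : max (((1 - x1) - 1) * r1) 0 = 0 := max_eq_right (by nlinarith)
    have e3 : (x1 - 0) * q1 + (x2 - 1) * q2 = x1*q1 - (1-x2)*q2 := by ring
    rw [e1, e2, e3, max_eq_left pr2']; linarith
  exfalso
  push_neg at h1 h2 h3 h4
  have hb1 : 2/3 < (1-x1) + (1-x2) := by linarith
  rcases le_or_gt (x2*q2) ((1-x1)*q1) with hP3 | hP3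
  · rw [max_eq_right (by linarith)] at h3
    have hx1small : x1 < 1/3 := by linarith
    rcases le_or_gt (x1*q1) ((1-x2)*q2) with hP4 | hP4
    · rw [max_eq_right (by linarith)] at h4
      have hx2small : x2 < 1/3 := by linarith
      linarith
    · -- case (iii)
      rw [max_eq_left (by linarith)] at h4
      have hA : 1/3 < x2*q2 := by linarith
      have hB : 1/3 < (1-x2)*(1-q2) := by nlinarith
      exact sixteenth x2 q2 hx20 hx21 hq20 hq21 hA hB
  · rcases le_or_gt (x1*q1) ((1-x2)*q2) with hP4 | hP4
    · -- case (ii)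
      rw [max_eq_left (by linarith)] at h3
      rw [max_eq_right (by linarith)] at h4
      have hx2small : x2 < 1/3 := by linarith
      have hA : 1/3 < x1*q1 := by linarith
      have hB : 1/3 < (1-x1)*(1-q1) := by nlinarith
      exact sixteenth x1 q1 hx10 hx11 hq10 hq11 hA hB
    · -- case (iv)
      rw [max_eq_left (by linarith)] at h3 h4
      have hq1pos : 0 < q1 := by nlinarith
      have hq2pos : 0 < q2 := by nlinarith
      have hxx : 1 < x1 + x2 := by
        have hm := mul_lt_mul'' hP3 hP4 pg1 pg2
        by_contra hc
        push_neg at hc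
        nlinarith [mul_nonneg (mul_nonneg hq10 hq20) (by linarith : (0:ℝ) ≤ 1 - x1 - x2)]
      have hb3 : 2/3 < (1-x1) + x2*q2 - (1-x1)*q1 := by linarith
      have hb4 : 2/3 < (1-x2) + x1*q1 - (1-x2)*q2 := by linarith
      rcases le_or_gt x1 (1/2) with hxa | hxa
      · have hx2b : 1/2 < x2 := by linarith
        have hd1 : x2 - x1 < 1/3 := by linarith
        have hd2 : 1/3 < x2 - x1 := by
          nlinarith [mul_nonneg hq10 (by linarith : (0:ℝ) ≤ 1 - 2*x1),
            mul_le_of_le_one_right (by linarith : (0:ℝ) ≤ 2*x2 - 1) hq21]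
        linarith
      · rcases le_or_gt x2 (1/2) with hxb | hxb
        · have hd1 : x1 - x2 < 1/3 := by linarith
          have hd2 : 1/3 < x1 - x2 := by
            nlinarith [mul_nonneg hq20 (by linarith : (0:ℝ) ≤ 1 - 2*x2),
              mul_le_of_le_one_right (by linarith : (0:ℝ) ≤ 2*x1 - 1) hq11]
          linarith
        · nlinarith [mul_le_of_le_one_right (by linarith : (0:ℝ) ≤ 2*x1 - 1) hq11,
            mul_le_of_le_one_right (by linarith : (0:ℝ) ≤ 2*x2 - 1) hq21]

private def cfun {N : Type*} [DecidableEq N] (p : N → N) (sh uv up : N → ℝ)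
    (i u : N) (b : Bool) : ℝ :=
  if i = u then (sh u - (if b then 1 else 0)) * uv u
  else if i = p u then ((1 - sh u) - (if b then 0 else 1)) * up u else 0

private lemma max_add_le_max_add_max (a b : ℝ) : max (a + b) 0 ≤ max a 0 + max b 0 := by
  apply max_le
  · exact add_le_add (le_max_left _ _) (le_max_left _ _)
  · positivity

private lemma key_round {N : Type*} [Fintype N] [DecidableEq N]
    (r : N) (p : N → N) (d : N → ℕ)
    (hd0 : ∀ u, d u = 0 ↔ u = r)
    (hpd : ∀ v, v ≠ r → d (p v) + 1 = d v)
    (sh uv up : N → ℝ)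
    (hsh0 : ∀ v, v ≠ r → 0 ≤ sh v) (hsh1 : ∀ v, v ≠ r → sh v ≤ 1)
    (huv0 : ∀ v, v ≠ r → 0 ≤ uv v) (huv1 : ∀ v, v ≠ r → uv v ≤ 1)
    (hup0 : ∀ v, v ≠ r → 0 ≤ up v) (hup1 : ∀ v, v ≠ r → up v ≤ 1) :
    ∀ n (S : Finset N), S.card ≤ n → (∀ v ∈ S, v ≠ r) → (∀ v ∈ S, p v ≠ r → p v ∈ S) →
    ∃ χ : N → Bool,
      ∑ i : N, max (∑ u ∈ S, cfun p sh uv up i u (χ u)) 0 ≤ ((S.card : ℝ) + 1) / 3 := by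
  intro n
  induction n with
  | zero =>
    intro S hcard _ _
    have : S = ∅ := Finset.card_eq_zero.1 (Nat.le_zero.1 hcard)
    subst this
    exact ⟨fun _ => true, by simp⟩
  | succ n ih =>
    intro S hcard hSr hSp
    rcases Finset.eq_empty_or_nonempty S with rfl | hne
    · exact ⟨fun _ => true, by simp⟩
    obtain ⟨v, hvS, hvmax⟩ := S.exists_max_image d hne
    have hvr : v ≠ r := hSr v hvS
    have hdv := hpd v hvr
    have hpvv : p v ≠ v := fun h => by rw [h] at hdv; omega
    by_cases hsib : ∃ w ∈ S, w ≠ v ∧ p w = p v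
    · obtain ⟨w, hwS, hwv, hpw⟩ := hsib
      have hwr : w ≠ r := hSr w hwS
      have hdw := hpd w hwr
      have hdvw : d w = d v := by rw [← hdv, ← hdw, hpw]
      have hpvw : p v ≠ w := fun h => by rw [hpw, h] at hdw; omega
      have hwS1 : w ∈ S.erase v := Finset.mem_erase.2 ⟨hwv, hwS⟩
      set S' := (S.erase v).erase w with hS'
      have hS'v : v ∉ S' := fun h => (Finset.mem_erase.1 (Finset.mem_erase.1 h).2).1 rfl
      have hS'w : w ∉ S' := fun h => (Finset.mem_erase.1 h).1 rfl
      have hS'sub : S' ⊆ S := fun z hz =>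
        (Finset.mem_erase.1 (Finset.mem_erase.1 hz).2).2
      have hcard2 : 2 ≤ S.card := Finset.one_lt_card.2 ⟨v, hvS, w, hwS, Ne.symm hwv⟩
      have hcardS' : S'.card + 2 = S.card := by
        rw [hS', Finset.card_erase_of_mem hwS1, Finset.card_erase_of_mem hvS]
        omega
      have inv2 : ∀ z ∈ S', p z ≠ r → p z ∈ S' := by
        intro z hz hpzr
        have hzS := hS'sub hz
        have hpz : p z ∈ S := hSp z hzS hpzr
        have hdz := hpd z (hSr z hzS)
        have hzle := hvmax z hzS
        refine Finset.mem_erase.2 ⟨?_, Finset.mem_erase.2 ⟨?_, hpz⟩⟩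
        · intro h; rw [h] at hdz; omega
        · intro h; rw [h] at hdz; omega
      obtain ⟨χ', hχ'⟩ := ih S' (by omega) (fun z hz => hSr z (hS'sub hz)) inv2
      obtain ⟨s1, s2, hch⟩ := cherry (1 - sh v) (1 - sh w) (up v) (up w) (uv v) (uv w)
        (by have := hsh1 v hvr; linarith) (by have := hsh0 v hvr; linarith)
        (by have := hsh1 w hwr; linarith) (by have := hsh0 w hwr; linarith)
        (hup0 v hvr) (hup1 v hvr) (hup0 w hwr) (hup1 w hwr)
        (huv0 v hvr) (huv1 v hvr) (huv0 w hwr) (huv1 w hwr)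
      refine ⟨fun z => if z = w then !s2 else if z = v then !s1 else χ' z, ?_⟩
      set χ : N → Bool := fun z => if z = w then !s2 else if z = v then !s1 else χ' z with hχ
      have hχv : χ v = !s1 := by
        simp only [hχ, if_neg (Ne.symm hwv), eq_self_iff_true, if_true]
      have hχw : χ w = !s2 := by simp only [hχ, eq_self_iff_true, if_true]
      have hχo : ∀ z ∈ S', χ z = χ' z := by
        intro z hz
        have h1 : z ≠ w := fun h => hS'w (by rwa [h] at hz)
        have h2 : z ≠ v := fun h => hS'v (by rwa [h] at hz)
        simp only [hχ, if_neg h1, if_neg h2]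
      have hsplit : ∀ i, (∑ u ∈ S, cfun p sh uv up i u (χ u)) =
          (cfun p sh uv up i v (χ v) + cfun p sh uv up i w (χ w))
          + ∑ u ∈ S', cfun p sh uv up i u (χ' u) := by
        intro i
        rw [← Finset.add_sum_erase _ _ hvS, ← Finset.add_sum_erase _ _ hwS1, ← hS', add_assoc]
        congr 1
        congr 1
        exact Finset.sum_congr rfl (fun z hz => by rw [hχo z hz])
      calc ∑ i : N, max (∑ u ∈ S, cfun p sh uv up i u (χ u)) 0
          ≤ ∑ i : N, (max (cfun p sh uv up i v (χ v) + cfun p sh uv up i w (χ w)) 0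
              + max (∑ u ∈ S', cfun p sh uv up i u (χ' u)) 0) := by
            apply Finset.sum_le_sum
            intro i _
            rw [hsplit i]
            exact max_add_le_max_add_max _ _
        _ = (∑ i : N, max (cfun p sh uv up i v (χ v) + cfun p sh uv up i w (χ w)) 0)
            + ∑ i : N, max (∑ u ∈ S', cfun p sh uv up i u (χ' u)) 0 :=
            Finset.sum_add_distrib
        _ ≤ 2/3 + ((S'.card : ℝ) + 1) / 3 := by
            refine add_le_add ?_ hχ'
            have hzero : ∀ i ∈ (Finset.univ : Finset N), i ∉ ({v, w, p v} : Finset N) →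
                max (cfun p sh uv up i v (χ v) + cfun p sh uv up i w (χ w)) 0 = 0 := by
              intro i _ hi
              simp only [Finset.mem_insert, Finset.mem_singleton, not_or] at hi
              obtain ⟨hiv, hiw, hipv⟩ := hi
              have hipw : ¬ i = p w := by rw [hpw]; exact hipv
              simp only [cfun, if_neg hiv, if_neg hiw, if_neg hipv, if_neg hipw]
              simp
            rw [← Finset.sum_subset (Finset.subset_univ ({v, w, p v} : Finset N)) hzero]
            have h1 : v ∉ ({w, p v} : Finset N) := by
              simp only [Finset.mem_insert, Finset.mem_singleton, not_or]
              exact ⟨Ne.symm hwv, fun h => hpvv h.symm⟩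
            have h2 : w ∉ ({p v} : Finset N) := by
              simp only [Finset.mem_singleton]
              exact fun h => hpvw h.symm
            rw [Finset.sum_insert h1, Finset.sum_insert h2, Finset.sum_singleton]
            have ev : cfun p sh uv up v v (χ v) + cfun p sh uv up v w (χ w)
                = ((1 - (1 - sh v)) - (if s1 then 0 else 1)) * uv v := by
              have hvpw : ¬ v = p w := by rw [hpw]; exact fun h => hpvv h.symm
              simp only [cfun, eq_self_iff_true, if_true, if_neg (Ne.symm hwv), if_neg hvpw, hχv]
              cases s1 <;> norm_num
            have ew : cfun p sh uv up w v (χ v) + cfun p sh uv up w w (χ w)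
                = ((1 - (1 - sh w)) - (if s2 then 0 else 1)) * uv w := by
              have hwpv : ¬ w = p v := fun h => hpvw h.symm
              simp only [cfun, if_neg hwv, if_neg hwpv, eq_self_iff_true, if_true, hχw]
              cases s2 <;> norm_num
            have ec : cfun p sh uv up (p v) v (χ v) + cfun p sh uv up (p v) w (χ w)
                = ((1 - sh v) - (if s1 then 1 else 0)) * up v
                  + ((1 - sh w) - (if s2 then 1 else 0)) * up w := by
              simp only [cfun, if_neg hpvv, eq_self_iff_true, if_true, if_neg hpvw, if_pos hpw.symm, hχv, hχw]
              cases s1 <;> cases s2 <;> norm_num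
            rw [ev, ew, ec]
            linarith [hch]
        _ ≤ ((S.card : ℝ) + 1) / 3 := by
            have : (S.card : ℝ) = (S'.card : ℝ) + 2 := by
              rw [← hcardS']; push_cast; ring
            rw [this]; linarith
    · push_neg at hsib
      by_cases hpvr : p v = r
      · -- here S = {v}
        have hdr : d r = 0 := (hd0 r).2 rfl
        have hdv1 : d v = 1 := by rw [← hdv, hpvr, hdr]
        have hSv : S = {v} := by
          apply Finset.eq_singleton_iff_unique_mem.2 ⟨hvS, ?_⟩
          intro u huS
          by_contra hne'
          have hur := hSr u huS
          have hdu := hpd u hur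
          have hle : d u ≤ 1 := hdv1 ▸ hvmax u huS
          have hne0 : d u ≠ 0 := fun h => hur ((hd0 u).1 h)
          have : d (p u) = 0 := by omega
          have hpur : p u = r := (hd0 _).1 this
          exact hsib u huS hne' (by rw [hpur, hpvr])
        have hbound : ∀ b : Bool,
            (∀ i ∈ (Finset.univ : Finset N), i ∉ ({v, p v} : Finset N) →
              max (cfun p sh uv up i v b) 0 = 0) := by
          intro b i _ hi
          simp only [Finset.mem_insert, Finset.mem_singleton, not_or] at hi
          simp only [cfun, if_neg hi.1, if_neg hi.2]
          simp
        have hvnpv : v ∉ ({p v} : Finset N) := by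
          simp only [Finset.mem_singleton]
          exact fun h => hpvv h.symm
        rcases le_or_gt (sh v) (1/2) with hc | hc
        · refine ⟨fun _ => false, ?_⟩
          rw [hSv]
          simp only [Finset.sum_singleton, Finset.card_singleton]
          rw [← Finset.sum_subset (Finset.subset_univ ({v, p v} : Finset N)) (hbound false),
            Finset.sum_insert hvnpv, Finset.sum_singleton]
          have e1 : cfun p sh uv up v v false = sh v * uv v := by
            simp only [cfun, eq_self_iff_true, if_true]; norm_num
          have e2 : max (cfun p sh uv up (p v) v false) 0 = 0 := by
            apply max_eq_right
            simp only [cfun, if_neg hpvv, eq_self_iff_true, if_true, Bool.false_eq_true, if_false]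
            nlinarith [mul_nonneg (hsh0 v hvr) (hup0 v hvr)]
          rw [e1, e2]
          have h1 : sh v * uv v ≤ sh v := mul_le_of_le_one_right (hsh0 v hvr) (huv1 v hvr)
          have h2 : 0 ≤ sh v * uv v := mul_nonneg (hsh0 v hvr) (huv0 v hvr)
          rw [max_eq_left h2]
          push_cast
          linarith
        · refine ⟨fun _ => true, ?_⟩
          rw [hSv]
          simp only [Finset.sum_singleton, Finset.card_singleton]
          rw [← Finset.sum_subset (Finset.subset_univ ({v, p v} : Finset N)) (hbound true),
            Finset.sum_insert hvnpv, Finset.sum_singleton]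
          have e1 : max (cfun p sh uv up v v true) 0 = 0 := by
            apply max_eq_right
            simp only [cfun, eq_self_iff_true, if_true]
            nlinarith [mul_nonneg (by have := hsh1 v hvr; linarith : (0:ℝ) ≤ 1 - sh v) (huv0 v hvr)]
          have e2 : cfun p sh uv up (p v) v true = (1 - sh v) * up v := by
            simp only [cfun, if_neg hpvv, eq_self_iff_true, if_true]; norm_num
          rw [e1, e2]
          have h1 : (1 - sh v) * up v ≤ 1 - sh v :=
            mul_le_of_le_one_right (by have := hsh1 v hvr; linarith) (hup1 v hvr)
          have h2 : 0 ≤ (1 - sh v) * up v :=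
            mul_nonneg (by have := hsh1 v hvr; linarith) (hup0 v hvr)
          rw [max_eq_left h2]
          push_cast
          linarith
      · -- parent case: pair v with u := p v
        have hpvS : p v ∈ S := hSp v hvS hpvr
        have hdu := hpd (p v) hpvr
        have hppv : p (p v) ≠ v := fun h => by rw [h] at hdu; omega
        have hppu : p (p v) ≠ p v := fun h => by rw [h] at hdu; omega
        have hpvS1 : p v ∈ S.erase v := Finset.mem_erase.2 ⟨hpvv, hpvS⟩
        set S' := (S.erase v).erase (p v) with hS'
        have hS'v : v ∉ S' := fun h => (Finset.mem_erase.1 (Finset.mem_erase.1 h).2).1 rfl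
        have hS'u : p v ∉ S' := fun h => (Finset.mem_erase.1 h).1 rfl
        have hS'sub : S' ⊆ S := fun z hz =>
          (Finset.mem_erase.1 (Finset.mem_erase.1 hz).2).2
        have hcard2 : 2 ≤ S.card := Finset.one_lt_card.2 ⟨v, hvS, p v, hpvS, fun h => hpvv h.symm⟩
        have hcardS' : S'.card + 2 = S.card := by
          rw [hS', Finset.card_erase_of_mem hpvS1, Finset.card_erase_of_mem hvS]
          omega
        have inv2 : ∀ z ∈ S', p z ≠ r → p z ∈ S' := by
          intro z hz hpzr
          have hzS := hS'sub hz
          have hpz : p z ∈ S := hSp z hzS hpzr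
          have hdz := hpd z (hSr z hzS)
          have hzle := hvmax z hzS
          have hzv : z ≠ v := fun h => hS'v (by rwa [h] at hz)
          refine Finset.mem_erase.2 ⟨?_, Finset.mem_erase.2 ⟨?_, hpz⟩⟩
          · exact fun h => hsib z hzS hzv h
          · intro h; rw [h] at hdz; omega
        obtain ⟨χ', hχ'⟩ := ih S' (by omega) (fun z hz => hSr z (hS'sub hz)) inv2
        obtain ⟨s1, s2, hch⟩ := cherry (1 - sh v) (sh (p v)) (up v) (uv (p v)) (uv v) (up (p v))
          (by have := hsh1 v hvr; linarith) (by have := hsh0 v hvr; linarith)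
          (hsh0 _ hpvr) (hsh1 _ hpvr)
          (hup0 v hvr) (hup1 v hvr) (huv0 _ hpvr) (huv1 _ hpvr)
          (huv0 v hvr) (huv1 v hvr) (hup0 _ hpvr) (hup1 _ hpvr)
        refine ⟨fun z => if z = p v then s2 else if z = v then !s1 else χ' z, ?_⟩
        set χ : N → Bool := fun z => if z = p v then s2 else if z = v then !s1 else χ' z with hχ
        have hvpv : ¬ v = p v := fun h => hpvv h.symm
        have hvppv : ¬ v = p (p v) := fun h => hppv h.symm
        have hχv : χ v = !s1 := by
          simp only [hχ, if_neg hvpv, eq_self_iff_true, if_true]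
        have hχu : χ (p v) = s2 := by simp only [hχ, eq_self_iff_true, if_true]
        have hχo : ∀ z ∈ S', χ z = χ' z := by
          intro z hz
          have h1 : z ≠ p v := fun h => hS'u (by rwa [h] at hz)
          have h2 : z ≠ v := fun h => hS'v (by rwa [h] at hz)
          simp only [hχ, if_neg h1, if_neg h2]
        have hsplit : ∀ i, (∑ u ∈ S, cfun p sh uv up i u (χ u)) =
            (cfun p sh uv up i v (χ v) + cfun p sh uv up i (p v) (χ (p v)))
            + ∑ u ∈ S', cfun p sh uv up i u (χ' u) := by
          intro i
          rw [← Finset.add_sum_erase _ _ hvS, ← Finset.add_sum_erase _ _ hpvS1, ← hS', add_assoc]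
          congr 1
          congr 1
          exact Finset.sum_congr rfl (fun z hz => by rw [hχo z hz])
        calc ∑ i : N, max (∑ u ∈ S, cfun p sh uv up i u (χ u)) 0
            ≤ ∑ i : N, (max (cfun p sh uv up i v (χ v) + cfun p sh uv up i (p v) (χ (p v))) 0
                + max (∑ u ∈ S', cfun p sh uv up i u (χ' u)) 0) := by
              apply Finset.sum_le_sum
              intro i _
              rw [hsplit i]
              exact max_add_le_max_add_max _ _
          _ = (∑ i : N, max (cfun p sh uv up i v (χ v) + cfun p sh uv up i (p v) (χ (p v))) 0)
              + ∑ i : N, max (∑ u ∈ S', cfun p sh uv up i u (χ' u)) 0 :=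
              Finset.sum_add_distrib
          _ ≤ 2/3 + ((S'.card : ℝ) + 1) / 3 := by
              refine add_le_add ?_ hχ'
              have hzero : ∀ i ∈ (Finset.univ : Finset N),
                  i ∉ ({v, p (p v), p v} : Finset N) →
                  max (cfun p sh uv up i v (χ v) + cfun p sh uv up i (p v) (χ (p v))) 0 = 0 := by
                intro i _ hi
                simp only [Finset.mem_insert, Finset.mem_singleton, not_or] at hi
                obtain ⟨hiv, hipp, hipv⟩ := hi
                simp only [cfun, if_neg hiv, if_neg hipv, if_neg hipp]
                simp
              rw [← Finset.sum_subset
                (Finset.subset_univ ({v, p (p v), p v} : Finset N)) hzero]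
              have h1 : v ∉ ({p (p v), p v} : Finset N) := by
                simp only [Finset.mem_insert, Finset.mem_singleton, not_or]
                exact ⟨fun h => hppv h.symm, fun h => hpvv h.symm⟩
              have h2 : p (p v) ∉ ({p v} : Finset N) := by
                simp only [Finset.mem_singleton]
                exact hppu
              rw [Finset.sum_insert h1, Finset.sum_insert h2, Finset.sum_singleton]
              have ev : cfun p sh uv up v v (χ v) + cfun p sh uv up v (p v) (χ (p v))
                  = ((1 - (1 - sh v)) - (if s1 then 0 else 1)) * uv v := by
                simp only [cfun, eq_self_iff_true, if_true, if_neg hvpv, if_neg hvppv, hχv]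
                cases s1 <;> norm_num
              have ew : cfun p sh uv up (p (p v)) v (χ v)
                    + cfun p sh uv up (p (p v)) (p v) (χ (p v))
                  = ((1 - sh (p v)) - (if s2 then 0 else 1)) * up (p v) := by
                simp only [cfun, if_neg hppv, if_neg hppu, eq_self_iff_true, if_true, hχu]
                cases s2 <;> norm_num
              have ec : cfun p sh uv up (p v) v (χ v) + cfun p sh uv up (p v) (p v) (χ (p v))
                  = ((1 - sh v) - (if s1 then 1 else 0)) * up v
                    + (sh (p v) - (if s2 then 1 else 0)) * uv (p v) := by
                simp only [cfun, if_neg hpvv, eq_self_iff_true, if_true, hχv, hχu]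
                cases s1 <;> cases s2 <;> norm_num
              rw [ev, ew, ec]
              linarith [hch]
          _ ≤ ((S.card : ℝ) + 1) / 3 := by
              have : (S.card : ℝ) = (S'.card : ℝ) + 2 := by
                rw [← hcardS']; push_cast; ring
              rw [this]; linarith



/-- Rounding a weighted proportional fractional allocation of goods whose item-sharing
graph is a tree on all `n` agents and has no shattered items: there is an integral
allocation giving every item to one of its holders with total subsidy at most `n/3`. -/
theorem goods_tree_rounding_no_shattered
    {N M : Type*} [Fintype N] [Fintype M] [DecidableEq N]
    (w : N → ℝ) (v : N → M → ℝ)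
    (hwpos : ∀ i, 0 < w i) (hwsum : ∑ i, w i = 1)
    (hv0 : ∀ i e, 0 ≤ v i e) (hv1 : ∀ i e, v i e ≤ 1)
    (x : N → M → ℝ)
    (hx0 : ∀ i e, 0 ≤ x i e) (hx1 : ∀ i e, x i e ≤ 1)
    (hxsum : ∀ e, ∑ i, x i e = 1)
    (hWPROP : ∀ i, w i * ∑ e, v i e ≤ ∑ e, x i e * v i e)
    -- every item is held by one agent or shared by exactly two agents
    (hshare : ∀ e : M,
      (Finset.univ.filter (fun i : N => 0 < x i e)).card = 1 ∨
      (Finset.univ.filter (fun i : N => 0 < x i e)).card = 2)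
    -- distinct fractional items are shared by distinct pairs of agents
    (hdist : ∀ e e' : M,
      (Finset.univ.filter (fun i : N => 0 < x i e)).card = 2 →
      (Finset.univ.filter (fun i : N => 0 < x i e')).card = 2 →
      Finset.univ.filter (fun i : N => 0 < x i e) =
        Finset.univ.filter (fun i : N => 0 < x i e') → e = e')
    -- the item-sharing graph is a tree on all agents
    (G : SimpleGraph N)
    (hG : ∀ i j : N, G.Adj i j ↔ i ≠ j ∧ ∃ e : M, 0 < x i e ∧ 0 < x j e)
    (htree : G.IsTree) :
    ∃ X : M → N,
      (∀ e, 0 < x (X e) e) ∧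
      ∑ i, max (w i * (∑ e, v i e) - ∑ e, if X e = i then v i e else 0) 0
        ≤ (Fintype.card N : ℝ) / 3 := by
  classical
  have hconn := htree.isConnected
  have hNe : Nonempty N := hconn.nonempty
  obtain ⟨r⟩ := hNe
  set d : N → ℕ := fun a => G.dist r a with hd
  have hd0 : ∀ u, d u = 0 ↔ u = r := by
    intro u
    constructor
    · intro h
      exact ((hconn.dist_eq_zero_iff).1 h).symm
    · rintro rfl
      exact SimpleGraph.dist_self
  -- parent existence
  have hpar : ∀ a : N, a ≠ r → ∃ u : N, G.Adj a u ∧ d u + 1 = d a := by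
    intro a har
    obtain ⟨q, hq⟩ := (hconn a r).exists_walk_length_eq_dist
    revert hq
    cases q with
    | nil => intro _; exact absurd rfl har
    | @cons _ u _ hadj q' =>
      intro hq
      refine ⟨u, hadj, ?_⟩
      rw [SimpleGraph.Walk.length_cons] at hq
      have h1 : G.dist u r ≤ q'.length := SimpleGraph.dist_le q'
      have h2 : G.dist a r ≤ G.dist a u + G.dist u r := hconn.dist_triangle
      have h3 : G.dist a u ≤ 1 := by
        have := SimpleGraph.dist_le (SimpleGraph.Walk.cons hadj (SimpleGraph.Walk.nil))
        simpa using this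
      have e1 : d a = G.dist a r := SimpleGraph.dist_comm
      have e2 : d u = G.dist u r := SimpleGraph.dist_comm
      omega
  choose pfun hpadj hpdep using hpar
  set p : N → N := fun a => if h : a = r then r else pfun a h with hp
  have hpd : ∀ a, a ≠ r → d (p a) + 1 = d a := by
    intro a ha
    simp only [hp, dif_neg ha]
    exact hpdep a ha
  have hadjp : ∀ a, a ≠ r → G.Adj a (p a) := by
    intro a ha
    simp only [hp, dif_neg ha]
    exact hpadj a ha
  have hpself : ∀ a, a ≠ r → p a ≠ a := by
    intro a ha h
    have := hpd a ha
    rw [h] at this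
    omega
  -- items for parent edges
  have hitem : ∀ a : N, a ≠ r → ∃ e : M, 0 < x a e ∧ 0 < x (p a) e := by
    intro a ha
    exact ((hG a (p a)).1 (hadjp a ha)).2
  choose item hitemx hitempx using hitem
  -- holder sets
  set H : M → Finset N := fun e => Finset.univ.filter (fun i => 0 < x i e) with hH
  have hHmem : ∀ e i, i ∈ H e ↔ 0 < x i e := by
    intro e i; simp [hH]
  have hxzero : ∀ e i, i ∉ H e → x i e = 0 := by
    intro e i hi
    have : ¬ 0 < x i e := fun h => hi ((hHmem e i).2 h)
    exact le_antisymm (not_lt.1 this) (hx0 i e)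
  have hHsum : ∀ e, ∑ i ∈ H e, x i e = 1 := by
    intro e
    rw [Finset.sum_subset (Finset.subset_univ _) (fun i _ hi => hxzero e i hi), hxsum e]
  have hshare' : ∀ e, (H e).card = 1 ∨ (H e).card = 2 := by
    intro e; exact hshare e
  have hdist' : ∀ e e', (H e).card = 2 → (H e').card = 2 → H e = H e' → e = e' := by
    intro e e'; exact hdist e e'
  have hpaircard : ∀ a, a ≠ r → ({a, p a} : Finset N).card = 2 := by
    intro a ha
    rw [Finset.card_insert_of_notMem
      (by simp only [Finset.mem_singleton]; exact fun h => hpself a ha h.symm),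
      Finset.card_singleton]
  have hHpair : ∀ a (ha : a ≠ r), H (item a ha) = {a, p a} := by
    intro a ha
    have hsub : ({a, p a} : Finset N) ⊆ H (item a ha) := by
      intro z hz
      rcases Finset.mem_insert.1 hz with hz1 | hz'
      · rw [hz1]; exact (hHmem _ _).2 (hitemx a ha)
      · rw [Finset.mem_singleton.1 hz']
        exact (hHmem _ _).2 (hitempx a ha)
    rcases hshare' (item a ha) with h1 | h2
    · exfalso
      have := Finset.card_le_card hsub
      rw [h1, hpaircard a ha] at this
      omega
    · exact (Finset.eq_of_subset_of_card_le hsub (by rw [h2, hpaircard a ha])).symm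
  have hitemcard : ∀ a (ha : a ≠ r), (H (item a ha)).card = 2 := by
    intro a ha
    rw [hHpair a ha]
    exact hpaircard a ha
  -- injectivity of item
  have hiteminj : ∀ a (ha : a ≠ r) b (hb : b ≠ r), item a ha = item b hb → a = b := by
    intro a ha b hb heq
    have hpq : ({a, p a} : Finset N) = {b, p b} := by
      rw [← hHpair a ha, ← hHpair b hb, heq]
    have hamem : a ∈ ({b, p b} : Finset N) := hpq ▸ Finset.mem_insert_self a {p a}
    rcases Finset.mem_insert.1 hamem with h | h
    · exact h
    · rw [Finset.mem_singleton] at h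
      have hbmem : b ∈ ({a, p a} : Finset N) := by
        rw [hpq]; exact Finset.mem_insert_self b {p b}
      rcases Finset.mem_insert.1 hbmem with h' | h'
      · exact h'.symm
      · exfalso
        rw [Finset.mem_singleton] at h'
        have hda := hpd a ha
        have hdb := hpd b hb
        rw [← h'] at hda
        rw [← h] at hdb
        omega
  letI : DecidableRel G.Adj := fun i j => decidable_of_iff _ (hG i j).symm
  have hedgecard : G.edgeFinset.card + 1 = Fintype.card N := htree.card_edgeFinset
  set Fr : Finset M := Finset.univ.filter (fun e => (H e).card = 2) with hFr
  have hFrmem : ∀ e, e ∈ Fr ↔ (H e).card = 2 := by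
    intro e; simp [hFr]
  have pair_eq : ∀ (a b c ee : N), a ≠ b → ({a, b} : Finset N) = {c, ee} →
      (a = c ∧ b = ee) ∨ (a = ee ∧ b = c) := by
    intro a b c ee hab h
    have ha : a ∈ ({c, ee} : Finset N) := h ▸ Finset.mem_insert_self a {b}
    have hb : b ∈ ({c, ee} : Finset N) := h ▸
      Finset.mem_insert.2 (Or.inr (Finset.mem_singleton_self b))
    rcases Finset.mem_insert.1 ha with h1 | h1
    · left
      refine ⟨h1, ?_⟩
      rcases Finset.mem_insert.1 hb with h2 | h2
      · exact absurd (h1.trans h2.symm) hab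
      · exact Finset.mem_singleton.1 h2
    · right
      have h1' : a = ee := Finset.mem_singleton.1 h1
      refine ⟨h1', ?_⟩
      rcases Finset.mem_insert.1 hb with h2 | h2
      · exact h2
      · exact absurd (h1'.trans (Finset.mem_singleton.1 h2).symm) hab
  have hpairex : ∀ e ∈ Fr, ∃ ab : N × N, ab.1 ≠ ab.2 ∧ H e = {ab.1, ab.2} := by
    intro e he
    obtain ⟨a, b, hab, habe⟩ := Finset.card_eq_two.1 ((hFrmem e).1 he)
    exact ⟨(a, b), hab, habe⟩
  choose pr hprne hprH using hpairex
  have hprmem1 : ∀ e he, (pr e he).1 ∈ H e := by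
    intro e he; rw [hprH e he]; exact Finset.mem_insert_self _ _
  have hprmem2 : ∀ e he, (pr e he).2 ∈ H e := by
    intro e he; rw [hprH e he]
    exact Finset.mem_insert.2 (Or.inr (Finset.mem_singleton_self _))
  have hpradj : ∀ e he, G.Adj (pr e he).1 (pr e he).2 := by
    intro e he
    exact (hG _ _).2 ⟨hprne e he, e, (hHmem _ _).1 (hprmem1 e he), (hHmem _ _).1 (hprmem2 e he)⟩
  have hcardFr : Fr.card = G.edgeFinset.card := by
    apply Finset.card_bij (t := G.edgeFinset) (fun e he => Sym2.mk (pr e he).1 (pr e he).2)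
    · intro e he
      rw [SimpleGraph.mem_edgeFinset]
      have : Sym2.mk (pr e he).1 (pr e he).2 = s((pr e he).1, (pr e he).2) := rfl
      rw [this, SimpleGraph.mem_edgeSet]
      exact hpradj e he
    · intro e1 he1 e2 he2 heq
      apply hdist e1 e2 ((hFrmem e1).1 he1) ((hFrmem e2).1 he2)
      show H e1 = H e2
      rw [hprH e1 he1, hprH e2 he2]
      have heq' : s((pr e1 he1).1, (pr e1 he1).2) = s((pr e2 he2).1, (pr e2 he2).2) := heq
      rcases Sym2.eq_iff.1 heq' with ⟨h1, h2⟩ | ⟨h1, h2⟩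
      · rw [h1, h2]
      · rw [h1, h2, Finset.pair_comm]
    · intro ε hε
      induction ε using Sym2.ind with
      | _ i j =>
        rw [SimpleGraph.mem_edgeFinset, SimpleGraph.mem_edgeSet] at hε
        obtain ⟨hij, e, hxi, hxj⟩ := (hG i j).1 hε
        have hsub : ({i, j} : Finset N) ⊆ H e := by
          intro z hz
          rcases Finset.mem_insert.1 hz with rfl | hz'
          · exact (hHmem _ _).2 hxi
          · rw [Finset.mem_singleton.1 hz']; exact (hHmem _ _).2 hxj
        have hij2 : ({i, j} : Finset N).card = 2 := by
          rw [Finset.card_insert_of_notMem (by simpa using hij), Finset.card_singleton]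
        have hecard : (H e).card = 2 := by
          rcases hshare' e with h1 | h2
          · exfalso
            have := Finset.card_le_card hsub
            omega
          · exact h2
        have heFr : e ∈ Fr := (hFrmem e).2 hecard
        refine ⟨e, heFr, ?_⟩
        have hHe : H e = {i, j} :=
          (Finset.eq_of_subset_of_card_le hsub (by omega)).symm
        have hpe : ({(pr e heFr).1, (pr e heFr).2} : Finset N) = {i, j} := by
          rw [← hprH e heFr, hHe]
        have hmk : Sym2.mk (pr e heFr).1 (pr e heFr).2 = s((pr e heFr).1, (pr e heFr).2) := rfl
        rcases pair_eq _ _ _ _ (hprne e heFr) hpe with ⟨h1, h2⟩ | ⟨h1, h2⟩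
        · rw [hmk, h1, h2]
        · rw [hmk, h1, h2, Sym2.eq_swap]
  set S0 : Finset N := Finset.univ.filter (fun a => a ≠ r) with hS0
  have hneS0 : ∀ a ∈ S0, a ≠ r := fun a ha => (Finset.mem_filter.1 ha).2
  have hS0card : S0.card + 1 = Fintype.card N := by
    rw [hS0, Finset.filter_ne', Finset.card_erase_of_mem (Finset.mem_univ r),
      Finset.card_univ]
    have hpos : 0 < Fintype.card N := Fintype.card_pos_iff.2 ⟨r⟩
    omega
  have hcardle : Fr.card ≤ S0.card := by omega
  have hsurj : ∀ e ∈ Fr, ∃ a ha, e = item a (hneS0 a ha) :=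
    Finset.surj_on_of_inj_on_of_card_le (fun a ha => item a (hneS0 a ha))
      (fun a ha => (hFrmem _).2 (hitemcard a (hneS0 a ha)))
      (fun a₁ a₂ ha₁ ha₂ heq => hiteminj a₁ (hneS0 a₁ ha₁) a₂ (hneS0 a₂ ha₂) heq)
      hcardle
  -- share/value data for the rounding lemma
  set shf : N → ℝ := fun a => if h : a = r then 0 else x a (item a h) with hshf
  set uvf : N → ℝ := fun a => if h : a = r then 0 else v a (item a h) with huvf
  set upf : N → ℝ := fun a => if h : a = r then 0 else v (p a) (item a h) with hupf
  obtain ⟨χ, hχ⟩ := key_round r p d hd0 hpd shf uvf upf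
    (fun a ha => by simp only [hshf, dif_neg ha]; exact hx0 _ _)
    (fun a ha => by simp only [hshf, dif_neg ha]; exact hx1 _ _)
    (fun a ha => by simp only [huvf, dif_neg ha]; exact hv0 _ _)
    (fun a ha => by simp only [huvf, dif_neg ha]; exact hv1 _ _)
    (fun a ha => by simp only [hupf, dif_neg ha]; exact hv0 _ _)
    (fun a ha => by simp only [hupf, dif_neg ha]; exact hv1 _ _)
    S0.card S0 le_rfl hneS0
    (fun a ha hpr => Finset.mem_filter.2 ⟨Finset.mem_univ _, hpr⟩)
  -- the integral allocation
  set X : M → N := fun e =>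
    if h : ∃ a : N, ∃ ha : a ≠ r, item a ha = e then
      (if χ h.choose then h.choose else p h.choose)
    else if h2 : ∃ a, H e = {a} then h2.choose else r
    with hX
  have hXitem : ∀ a (ha : a ≠ r), X (item a ha) = if χ a then a else p a := by
    intro a ha
    have hex : ∃ b : N, ∃ hb : b ≠ r, item b hb = item a ha := ⟨a, ha, rfl⟩
    simp only [hX]
    rw [dif_pos hex]
    obtain ⟨hb, hbe⟩ := hex.choose_spec
    have hca : hex.choose = a := hiteminj _ hb _ ha hbe
    rw [hca]
  have hFrIff : ∀ e, (∃ a : N, ∃ ha : a ≠ r, item a ha = e) ↔ e ∈ Fr := by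
    intro e
    constructor
    · rintro ⟨a, ha, rfl⟩
      exact (hFrmem _).2 (hitemcard a ha)
    · intro he
      obtain ⟨a, ha, hae⟩ := hsurj e he
      exact ⟨a, hneS0 a ha, hae.symm⟩
  have hXsole : ∀ e, e ∉ Fr → H e = {X e} := by
    intro e he
    have hnex : ¬ ∃ a : N, ∃ ha : a ≠ r, item a ha = e := fun h => he ((hFrIff e).1 h)
    have hcard1 : (H e).card = 1 := by
      rcases hshare' e with h | h
      · exact h
      · exact absurd ((hFrmem e).2 h) he
    have hex2 : ∃ a, H e = {a} := Finset.card_eq_one.1 hcard1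
    simp only [hX]
    rw [dif_neg hnex, dif_pos hex2]
    exact hex2.choose_spec
  have hXpos : ∀ e, 0 < x (X e) e := by
    intro e
    by_cases he : e ∈ Fr
    · obtain ⟨a, haS, hae⟩ := hsurj e he
      have har := hneS0 a haS
      rw [hae, hXitem a har]
      by_cases hb : χ a
      · rw [if_pos hb]; exact hitemx a har
      · rw [if_neg hb]; exact hitempx a har
    · have h1 := hXsole e he
      have : X e ∈ H e := by rw [h1]; exact Finset.mem_singleton_self _
      exact (hHmem _ _).1 this
  refine ⟨X, hXpos, ?_⟩
  have hstep1 : ∀ i, w i * (∑ e, v i e) - (∑ e, if X e = i then v i e else 0)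
      ≤ ∑ e, (x i e - if X e = i then 1 else 0) * v i e := by
    intro i
    have h2 : ∑ e, (x i e - if X e = i then 1 else 0) * v i e
        = (∑ e, x i e * v i e) - ∑ e, (if X e = i then v i e else 0) := by
      rw [← Finset.sum_sub_distrib]
      apply Finset.sum_congr rfl
      intro e _
      split <;> ring
    rw [h2]
    have := hWPROP i
    linarith
  have hstep2 : ∀ i, (∑ e, (x i e - if X e = i then 1 else 0) * v i e)
      = ∑ e ∈ Fr, (x i e - if X e = i then 1 else 0) * v i e := by
    intro i
    symm
    apply Finset.sum_subset (Finset.subset_univ _)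
    intro e _ he
    have hsole := hXsole e he
    by_cases hi : X e = i
    · have hx1' : x i e = 1 := by
        have hs := hHsum e
        rw [hsole, Finset.sum_singleton, hi] at hs
        exact hs
      rw [if_pos hi, hx1']
      ring
    · have hmem : i ∉ H e := by
        rw [hsole, Finset.mem_singleton]
        exact fun h => hi h.symm
      rw [if_neg hi, hxzero e i hmem]
      ring
  have hstep3 : ∀ i, (∑ e ∈ Fr, (x i e - if X e = i then 1 else 0) * v i e)
      = ∑ a ∈ S0, cfun p shf uvf upf i a (χ a) := by
    intro i
    symm
    apply Finset.sum_bij (fun a ha => item a (hneS0 a ha))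
    · intro a ha
      exact (hFrmem _).2 (hitemcard a (hneS0 a ha))
    · intro a1 h1 a2 h2 heq
      exact hiteminj a1 (hneS0 a1 h1) a2 (hneS0 a2 h2) heq
    · intro e he
      obtain ⟨a, ha, hae⟩ := hsurj e he
      exact ⟨a, ha, hae.symm⟩
    · intro a ha
      set har := hneS0 a ha with hhar
      have hXe : X (item a har) = if χ a then a else p a := hXitem a har
      have hpa := hpself a har
      have hxsum2 : x a (item a har) + x (p a) (item a har) = 1 := by
        have hs := hHsum (item a har)
        rw [hHpair a har, Finset.sum_pair (fun h => hpa h.symm)] at hs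
        exact hs
      by_cases hia : i = a
      · subst hia
        simp only [cfun, eq_self_iff_true, if_true, hshf, huvf, dif_neg har]
        have hiteq : (if X (item i har) = i then (1:ℝ) else 0) = (if χ i then 1 else 0) := by
          by_cases hb : χ i
          · rw [if_pos hb] at hXe
            rw [if_pos hXe, if_pos hb]
          · rw [if_neg hb] at hXe
            rw [if_neg hb, if_neg (by rw [hXe]; exact hpa)]
        rw [hiteq]
      · by_cases hip : i = p a
        · subst hip
          simp only [cfun, if_neg hia, eq_self_iff_true, if_true, hupf, dif_neg har]
          have hxp : x (p a) (item a har) = 1 - shf a := by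
            simp only [hshf, dif_neg har]
            linarith
          rw [hxp]
          have hiteq : (if X (item a har) = p a then (1:ℝ) else 0) = (if χ a then 0 else 1) := by
            by_cases hb : χ a
            · rw [if_pos hb] at hXe
              rw [if_pos hb, if_neg (by rw [hXe]; exact fun h => hpa h.symm)]
            · rw [if_neg hb] at hXe
              rw [if_neg hb, if_pos hXe]
          rw [hiteq]
        · simp only [cfun, if_neg hia, if_neg hip]
          have hmem : i ∉ H (item a har) := by
            rw [hHpair a har]
            simp only [Finset.mem_insert, Finset.mem_singleton, not_or]
            exact ⟨hia, hip⟩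
          have hind : ¬ X (item a har) = i := by
            rw [hXe]
            by_cases hb : χ a
            · rw [if_pos hb]; exact fun h => hia h.symm
            · rw [if_neg hb]; exact fun h => hip h.symm
          rw [hxzero _ i hmem, if_neg hind]
          ring
  calc ∑ i, max (w i * (∑ e, v i e) - ∑ e, if X e = i then v i e else 0) 0
      ≤ ∑ i, max (∑ a ∈ S0, cfun p shf uvf upf i a (χ a)) 0 := by
        apply Finset.sum_le_sum
        intro i _
        apply max_le_max ?_ le_rfl
        rw [← hstep3 i, ← hstep2 i]
        exact hstep1 i
    _ ≤ ((S0.card : ℝ) + 1) / 3 := hχ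
    _ = (Fintype.card N : ℝ) / 3 := by
        have hc : (S0.card : ℝ) + 1 = (Fintype.card N : ℝ) := by
          rw [← hS0card]; push_cast; ring
        rw [hc]
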